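/- Let n, k ≥ 2 and let G ≤ S_n be a subgroup that is not Galois closed over k, with Galois closure H over k. Then H is k-thick: for every tuple a : {1,…,n} → {1,…,k} there exists a permutation γ ∈ H with γ ≠ id and a∘γ = a. -/

import Mathlib

/-- `σ ⊢ f`: the permutation `σ` leaves the function `f : ({1,…,k}^Ω) → {1,…,k}` invariant. -/
def InvariantUnder {Ω : Type*} (k : ℕ) (σ : Equiv.Perm Ω) (f : (Ω → Fin k) → Fin k) : Prop :=
  ∀ x : Ω → Fin k, f x = f (fun i => x (σ i))

/-- The Galois closure over `k` of a subgroup `G` of the symmetric group on `Ω`. -/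
def galoisClosure {Ω : Type*} (k : ℕ) (G : Subgroup (Equiv.Perm Ω)) : Set (Equiv.Perm Ω) :=
  {σ | ∀ f : (Ω → Fin k) → Fin k, (∀ π ∈ G, InvariantUnder k π f) → InvariantUnder k σ f}

/-- `G` is Galois closed over `k`. -/
def IsGaloisClosed {Ω : Type*} (k : ℕ) (G : Subgroup (Equiv.Perm Ω)) : Prop :=
  galoisClosure k G = (G : Set (Equiv.Perm Ω))

/-- If `G ≤ S_n` is not Galois closed over `k`, then its Galois closure is `k`-thick:
every tuple `a : {1,…,n} → {1,…,k}` has a non-identity stabilizing permutation in the closure. -/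
theorem stmt_11 (n k : ℕ) (hn : 2 ≤ n) (hk : 2 ≤ k) (G : Subgroup (Equiv.Perm (Fin n)))
    (hG : ¬ IsGaloisClosed k G) :
    ∀ a : Fin n → Fin k, ∃ γ ∈ galoisClosure k G, γ ≠ 1 ∧ ∀ i, a (γ i) = a i := by
  classical
  intro a
  have hGsub : (G : Set (Equiv.Perm (Fin n))) ⊆ galoisClosure k G := fun π hπ f hf => hf π hπ
  obtain ⟨σ, hσc, hσG⟩ : ∃ σ, σ ∈ galoisClosure k G ∧ σ ∉ G := by
    by_contra h
    push_neg at h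
    exact hG (Set.Subset.antisymm (fun σ hσ => h σ hσ) hGsub)
  set f : (Fin n → Fin k) → Fin k :=
    fun x => if ∃ π ∈ G, x = fun i => a (π i) then ⟨1, by omega⟩ else ⟨0, by omega⟩ with hfdef
  have hfG : ∀ π ∈ G, InvariantUnder k π f := by
    intro π hπ x
    simp only [hfdef]
    congr 1
    apply propext
    constructor
    · rintro ⟨ρ, hρ, rfl⟩
      exact ⟨ρ * π, mul_mem hρ hπ, rfl⟩
    · rintro ⟨ρ, hρ, h⟩
      refine ⟨ρ * π⁻¹, mul_mem hρ (inv_mem hπ), ?_⟩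
      funext i
      have := congrFun h (π⁻¹ i)
      simpa using this
  have h1 := hσc f hfG a
  have hfa : f a = ⟨1, by omega⟩ := by
    simp only [hfdef]
    rw [if_pos ⟨1, one_mem G, rfl⟩]
  rw [hfa] at h1
  have hex : ∃ π ∈ G, (fun i => a (σ i)) = fun i => a (π i) := by
    by_contra hc
    rw [hfdef] at h1
    simp only [if_neg hc] at h1
    exact absurd (congrArg Fin.val h1) (by simp)
  obtain ⟨π, hπ, hπa⟩ := hex
  refine ⟨σ * π⁻¹, ?_, ?_, ?_⟩
  · intro f' hf' x
    have hx : f' x = f' (fun i => x (σ i)) := hσc f' hf' x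
    have hy := hf' π hπ (fun i => x (σ (π⁻¹ i)))
    simp only [Equiv.Perm.inv_def, Equiv.symm_apply_apply] at hy
    rw [hx, ← hy]; rfl
  · intro h
    exact hσG (by rw [mul_inv_eq_one.mp h]; exact hπ)
  · intro i
    have := congrFun hπa (π⁻¹ i)
    simpa using this
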